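/- Let M be an Artinian R-module. Then the following are equivalent for Spec^s(M) with the second classical Zariski topology: (a) it is a Hausdorff space; (b) it is a T1-space; (c) it is the cofinite topology; (d) it is discrete; (e) Spec^s(M) = Min(M), the set of all minimal submodules of M. -/

import Mathlib

open Pointwise

variable (R M : Type*) [CommRing R] [AddCommGroup M] [Module R M]

/-- A nonzero submodule `S` is *second* if for every `r : R`, `r • S = S` or `r • S = ⊥`. -/
def IsSecondSubmodule (S : Submodule R M) : Prop :=
  S ≠ ⊥ ∧ ∀ r : R, r • S = S ∨ r • S = ⊥

/-- The second spectrum of `M`: the collection of all second submodules of `M`. -/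
def SecondSpec : Type _ := {S : Submodule R M // IsSecondSubmodule R M S}

/-- `V^{s*}(N)`: the set of second submodules contained in `N`. -/
def Vs (N : Submodule R M) : Set (SecondSpec R M) := {S | S.1 ≤ N}

/-- `W^s(N)`: the complement of `V^{s*}(N)` in `Spec^s(M)`. -/
def Ws (N : Submodule R M) : Set (SecondSpec R M) := (Vs R M N)ᶜ

/-- The second classical Zariski topology on `Spec^s(M)`, generated by the
sub-basis `{W^s(N) : N ≤ M}`. -/
instance secondZariski : TopologicalSpace (SecondSpec R M) :=
  TopologicalSpace.generateFrom {U | ∃ N : Submodule R M, U = Ws R M N}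

/-- The second socle of a submodule `N`: the sum of all second submodules of `M`
contained in `N`. -/
def secSocle (N : Submodule R M) : Submodule R M :=
  sSup {S : Submodule R M | IsSecondSubmodule R M S ∧ S ≤ N}

section Aux

variable {R M}

lemma mem_psmul {r : R} {S : Submodule R M} {x : M} :
    x ∈ r • S ↔ ∃ y ∈ S, r • y = x := by
  rw [← SetLike.mem_coe, Submodule.coe_pointwise_smul]
  exact Set.mem_smul_set

lemma psmul_eq_bot_iff {r : R} {S : Submodule R M} :
    r • S = ⊥ ↔ ∀ x ∈ S, r • x = (0 : M) := by
  constructor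
  · intro h x hx
    have hm : r • x ∈ r • S := Submodule.smul_mem_pointwise_smul x r S hx
    rwa [h, Submodule.mem_bot] at hm
  · intro h
    rw [eq_bot_iff]
    intro y hy
    obtain ⟨x, hx, rfl⟩ := mem_psmul.mp hy
    exact (Submodule.mem_bot R).mpr (h x hx)

lemma atom_psmul {S : Submodule R M} (hS : IsAtom S) (r : R) :
    r • S = S ∨ r • S = ⊥ := by
  rcases eq_or_lt_of_le (Submodule.smul_le_self_of_tower r S) with h | h
  · exact Or.inl h
  · exact Or.inr (hS.2 _ h)

lemma atom_isSecond {S : Submodule R M} (hS : IsAtom S) : IsSecondSubmodule R M S :=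
  ⟨hS.1, fun r => atom_psmul hS r⟩

lemma atom_eq_span {S : Submodule R M} (hS : IsAtom S) {x : M} (hx : x ∈ S) (hx0 : x ≠ 0) :
    S = Submodule.span R {x} := by
  have hle : Submodule.span R {x} ≤ S := (Submodule.span_singleton_le_iff_mem x S).mpr hx
  rcases eq_or_lt_of_le hle with h | h
  · exact h.symm
  · exact absurd (hS.2 _ h) (by simpa [Submodule.span_singleton_eq_bot] using hx0)

lemma flip_lemma {S T : Submodule R M} (hS : IsAtom S) (hT : IsAtom T)
    (h : ∀ r : R, r • T = ⊥ → r • S = ⊥) : ∀ r : R, r • S = ⊥ → r • T = ⊥ := by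
  intro s hs
  by_contra hne
  have hsT : s • T = T := (atom_psmul hT s).resolve_right hne
  obtain ⟨x, hx, hx0⟩ := (Submodule.ne_bot_iff T).mp hT.1
  have hxT : x ∈ s • T := by rw [hsT]; exact hx
  obtain ⟨y, hy, hxy⟩ := mem_psmul.mp hxT
  have hTspan := atom_eq_span hT hx hx0
  have hy' : y ∈ Submodule.span R {x} := by rw [← hTspan]; exact hy
  obtain ⟨c, rfl⟩ := Submodule.mem_span_singleton.mp hy'
  have h1 : (1 - s * c) • x = 0 := by
    have hsc : (s * c) • x = x := by rw [mul_smul]; exact hxy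
    rw [sub_smul, one_smul, hsc, sub_self]
  have h2 : (1 - s * c) • T = ⊥ := by
    rw [psmul_eq_bot_iff]
    intro z hz
    rw [hTspan] at hz
    obtain ⟨d, rfl⟩ := Submodule.mem_span_singleton.mp hz
    rw [smul_comm, h1, smul_zero]
  have h3 := h _ h2
  apply hS.1
  rw [eq_bot_iff]
  intro z hz
  have e1 := (psmul_eq_bot_iff.mp h3) z hz
  have e2 := (psmul_eq_bot_iff.mp hs) z hz
  have : z = (1 - s * c) • z + (s * c) • z := by
    rw [← add_smul]
    norm_num
  rw [Submodule.mem_bot, this, e1, mul_smul, smul_comm, e2, smul_zero, add_zero]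

lemma sup_isSecond {S T : Submodule R M} (hS : IsAtom S) (hT : IsAtom T)
    (h : ∀ r : R, r • S = ⊥ ↔ r • T = ⊥) : IsSecondSubmodule R M (S ⊔ T) := by
  refine ⟨fun hb => hS.1 (eq_bot_mono le_sup_left hb), fun r => ?_⟩
  rw [Submodule.smul_sup']
  rcases atom_psmul hS r with hrS | hrS
  · have hrT : r • T = T := by
      rcases atom_psmul hT r with h' | h'
      · exact h'
      · exact absurd ((h r).mpr h') (by rw [hrS]; exact hS.1)
    rw [hrS, hrT]; exact Or.inl rfl
  · rw [hrS, (h r).mp hrS, bot_sup_eq]; exact Or.inr rfl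

lemma exists_kill (he : {S : Submodule R M | IsSecondSubmodule R M S} = {S | IsAtom S})
    {S T : Submodule R M} (hS : IsAtom S) (hT : IsAtom T) (hne : S ≠ T) :
    ∃ r : R, r • T = ⊥ ∧ r • S = S := by
  have key : ∀ S' T' : Submodule R M, IsAtom S' → IsAtom T' → S' ≠ T' →
      ¬ ∀ r : R, r • S' = ⊥ ↔ r • T' = ⊥ := by
    intro S' T' hS' hT' hne' hiff
    have hsec := sup_isSecond hS' hT' hiff
    have hatom : IsAtom (S' ⊔ T') := (Set.ext_iff.mp he _).mp hsec
    have hlt : S' < S' ⊔ T' := by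
      rcases eq_or_lt_of_le (le_sup_left : S' ≤ S' ⊔ T') with h' | h'
      · exfalso
        have hTS : T' ≤ S' := by rw [h']; exact le_sup_right
        exact hne' (((hS'.le_iff).mp hTS).resolve_left hT'.1).symm
      · exact h'
    exact hS'.1 (hatom.2 _ hlt)
  -- not (P S ⊆ P T) would be ideal; first show ¬ (∀ r, r • T = ⊥ → r • S = ⊥) fails suitably
  have hmain : ¬ ∀ r : R, r • T = ⊥ → r • S = ⊥ := by
    intro hsub
    have hflip := flip_lemma hS hT hsub
    exact key S T hS hT hne (fun r => ⟨hflip r, hsub r⟩)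
  push_neg at hmain
  obtain ⟨r, hrT, hrS⟩ := hmain
  exact ⟨r, hrT, (atom_psmul hS r).resolve_right hrS⟩

lemma atoms_sSupIndep (he : {S : Submodule R M | IsSecondSubmodule R M S} = {S | IsAtom S}) :
    sSupIndep {S : Submodule R M | IsAtom S} := by
  classical
  intro S hSmem
  rw [disjoint_iff]
  by_contra hbot
  have hS : IsAtom S := hSmem
  have hle : S ≤ sSup ({S' : Submodule R M | IsAtom S'} \ {S}) := by
    have h1 : S ⊓ sSup ({S' : Submodule R M | IsAtom S'} \ {S}) ≤ S := inf_le_left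
    rcases (hS.le_iff).mp h1 with h' | h'
    · exact absurd h' hbot
    · exact inf_eq_left.mp h'
  -- S is a compact element
  obtain ⟨x, hx, hx0⟩ := (Submodule.ne_bot_iff S).mp hS.1
  have hfg : S.FG := by
    rw [atom_eq_span hS hx hx0]
    exact Submodule.fg_span_singleton x
  obtain ⟨t, htsub, htle⟩ := (CompleteLattice.isCompactElement_iff_exists_le_sSup_of_le_sSup (k := S)).mp
    ((Submodule.fg_iff_compact S).mp hfg) _ hle
  -- choice of killers
  set g : Submodule R M → R := fun T =>
    if h : ∃ r : R, r • T = ⊥ ∧ r • S = S then h.choose else 1 with hg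
  have hgspec : ∀ T ∈ t, g T • T = ⊥ ∧ g T • S = S := by
    intro T hT
    have hTmem := htsub hT
    have hex : ∃ r : R, r • T = ⊥ ∧ r • S = S :=
      exists_kill he hS hTmem.1 (fun h' => hTmem.2 (h' ▸ rfl))
    simp only [hg, dif_pos hex]
    exact hex.choose_spec
  set r : R := ∏ T ∈ t, g T with hr
  have hrS : r • S = S := by
    refine Finset.prod_induction g (fun a => a • S = S)
      (fun a b ha hb => by show (a * b) • S = S; rw [mul_smul, hb, ha]) (one_smul _ _) (fun T hT => (hgspec T hT).2)
  have hker : S ≤ LinearMap.ker (LinearMap.lsmul R M r) := by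
    refine le_trans htle ?_
    refine Finset.sup_le fun T hT => ?_
    intro z hz
    rw [LinearMap.mem_ker, LinearMap.lsmul_apply, hr,
      ← Finset.prod_erase_mul t g hT, mul_smul,
      psmul_eq_bot_iff.mp (hgspec T hT).1 z hz, smul_zero]
  have : r • S = ⊥ := by
    rw [psmul_eq_bot_iff]
    intro z hz
    have := hker hz
    rwa [LinearMap.mem_ker, LinearMap.lsmul_apply] at this
  exact hS.1 (by rw [← hrS, this])

lemma atoms_finite [IsArtinian R M]
    (he : {S : Submodule R M | IsSecondSubmodule R M S} = {S | IsAtom S}) :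
    {S : Submodule R M | IsAtom S}.Finite :=
  WellFoundedLT.finite_of_sSupIndep (atoms_sSupIndep he)

lemma ws_open (N : Submodule R M) : IsOpen (Ws R M N) :=
  TopologicalSpace.isOpen_generateFrom_of_mem ⟨N, rfl⟩

lemma vs_closed (N : Submodule R M) : IsClosed (Vs R M N) :=
  ⟨ws_open N⟩

lemma mem_open_of_le {o : Set (SecondSpec R M)} (ho : IsOpen o) {s t : SecondSpec R M}
    (hts : t.1 ≤ s.1) (hto : t ∈ o) : s ∈ o := by
  have ho' : TopologicalSpace.GenerateOpen {U | ∃ N : Submodule R M, U = Ws R M N} o := ho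
  clear ho
  induction ho' with
  | basic U hU =>
    obtain ⟨N, rfl⟩ := hU
    intro hsN
    exact hto (show t ∈ Vs R M N from le_trans hts (show s.1 ≤ N from hsN))
  | univ => trivial
  | inter U V hU hV ihU ihV => exact ⟨ihU hto.1, ihV hto.2⟩
  | sUnion Us hUs ih =>
    obtain ⟨U, hU, htU⟩ := hto
    exact ⟨U, hU, ih U hU htU⟩

lemma t1_to_eq [IsArtinian R M] (h : T1Space (SecondSpec R M)) :
    {S : Submodule R M | IsSecondSubmodule R M S} = {S : Submodule R M | IsAtom S} := by
  ext S
  simp only [Set.mem_setOf_eq]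
  constructor
  · intro hS
    have hAtomic : IsAtomic (Submodule R M) :=
      isAtomic_of_orderBot_wellFounded_lt wellFounded_lt
    rcases hAtomic.eq_bot_or_exists_atom_le S with h0 | ⟨T, hT, hTS⟩
    · exact absurd h0 hS.1
    set s : SecondSpec R M := ⟨S, hS⟩
    set t : SecondSpec R M := ⟨T, atom_isSecond hT⟩
    have hcl : t ∈ closure ({s} : Set (SecondSpec R M)) := by
      rw [mem_closure_iff]
      intro o ho hto
      exact ⟨s, mem_open_of_le ho hTS hto, rfl⟩
    rw [closure_singleton] at hcl
    have hts : T = S := congrArg Subtype.val hcl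
    rwa [← hts]
  · exact atom_isSecond

lemma eq_to_finite [IsArtinian R M]
    (he : {S : Submodule R M | IsSecondSubmodule R M S} = {S : Submodule R M | IsAtom S}) :
    Finite (SecondSpec R M) := by
  have hfin : {S : Submodule R M | IsSecondSubmodule R M S}.Finite := by
    rw [he]; exact atoms_finite he
  exact hfin.to_subtype

lemma singleton_closed
    (he : {S : Submodule R M | IsSecondSubmodule R M S} = {S : Submodule R M | IsAtom S})
    (s : SecondSpec R M) : IsClosed ({s} : Set (SecondSpec R M)) := by
  have hsingle : ({s} : Set (SecondSpec R M)) = Vs R M s.1 := by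
    ext t
    simp only [Set.mem_singleton_iff, Vs, Set.mem_setOf_eq]
    constructor
    · rintro rfl; exact le_rfl
    · intro hts
      have hs : IsAtom s.1 := (Set.ext_iff.mp he _).mp s.2
      have ht : IsAtom t.1 := (Set.ext_iff.mp he _).mp t.2
      exact Subtype.ext (((hs.le_iff).mp hts).resolve_left ht.1)
  rw [hsingle]
  exact vs_closed s.1

lemma eq_to_discrete [IsArtinian R M]
    (he : {S : Submodule R M | IsSecondSubmodule R M S} = {S : Submodule R M | IsAtom S}) :
    DiscreteTopology (SecondSpec R M) := by
  haveI : Finite (SecondSpec R M) := eq_to_finite he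
  haveI : T1Space (SecondSpec R M) := ⟨singleton_closed he⟩
  infer_instance

end Aux

/-- Cor 2.20: for an Artinian module `M`, Hausdorff, T1, cofinite, discrete and
`Spec^s(M) = Min(M)` are all equivalent for `Spec^s(M)`. -/
theorem stmt9 [IsArtinian R M] :
    List.TFAE
      [ T2Space (SecondSpec R M),
        T1Space (SecondSpec R M),
        (∀ U : Set (SecondSpec R M), IsOpen U ↔ (U = ∅ ∨ Uᶜ.Finite)),
        DiscreteTopology (SecondSpec R M),
        {S : Submodule R M | IsSecondSubmodule R M S} = {S : Submodule R M | IsAtom S} ] := by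
  tfae_have 1 → 2 := fun h => by haveI := h; infer_instance
  tfae_have 4 → 1 := fun h => by haveI := h; infer_instance
  tfae_have 2 → 5 := fun h => t1_to_eq h
  tfae_have 5 → 4 := fun he => eq_to_discrete he
  tfae_have 5 → 3 := by
    intro he U
    haveI := eq_to_finite (R := R) (M := M) he
    haveI := eq_to_discrete he
    exact ⟨fun _ => Or.inr (Set.toFinite _), fun _ => isOpen_discrete U⟩
  tfae_have 3 → 2 := by
    intro h
    refine ⟨fun x => ?_⟩
    rw [← isOpen_compl_iff]
    exact (h _).mpr (Or.inr (by rw [compl_compl]; exact Set.finite_singleton x))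
  tfae_finish
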